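/- No strictly suboptimal local minimizer: let F = {w ∈ ℂ : |w| = 1, s_b Re(w v_b) ≥ 0 ∀b} and P(w) = (1/N) Σ_b Q(t · s_b Re(w v_b)) with t > 0, where Q is the Gaussian Q-function. If w₁ ∈ F is a global minimizer of P over F, then every local minimizer w₂ ∈ F of P over F satisfies P(w₂) = P(w₁). -/

import Mathlib

open MeasureTheory Set

lemma gauss_integrable : Integrable (fun u : ℝ => Real.exp (-u ^ 2 / 2)) := by
  have h := integrable_exp_neg_mul_sq (b := (1/2 : ℝ)) (by norm_num)
  convert h using 2 with u
  ring_nf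

noncomputable def gaussQ (x : ℝ) : ℝ :=
  (Real.sqrt (2 * Real.pi))⁻¹ * ∫ u in Set.Ioi x, Real.exp (-u ^ 2 / 2)

lemma gaussQ_eq (x : ℝ) :
    gaussQ x = (Real.sqrt (2 * Real.pi))⁻¹ *
      ((∫ u in Set.Ioi (0:ℝ), Real.exp (-u ^ 2 / 2)) - ∫ u in (0:ℝ)..x, Real.exp (-u ^ 2 / 2)) := by
  unfold gaussQ
  congr 1
  have hi := gauss_integrable
  have h1 := intervalIntegral.integral_Iic_add_Ioi (b := x) hi.integrableOn hi.integrableOn (μ := volume)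
  have h2 := intervalIntegral.integral_Iic_add_Ioi (b := (0:ℝ)) hi.integrableOn hi.integrableOn (μ := volume)
  have h3 := intervalIntegral.integral_Iic_sub_Iic (a := (0:ℝ)) (b := x) (μ := volume)
    hi.integrableOn hi.integrableOn
  linarith [h1, h2, h3]

lemma gaussQ_hasDerivAt (x : ℝ) :
    HasDerivAt gaussQ (-((Real.sqrt (2 * Real.pi))⁻¹ * Real.exp (-x ^ 2 / 2))) x := by
  have hc : Continuous (fun u : ℝ => Real.exp (-u ^ 2 / 2)) := by continuity
  have h : HasDerivAt (fun y => ∫ u in (0:ℝ)..y, Real.exp (-u ^ 2 / 2))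
      (Real.exp (-x ^ 2 / 2)) x :=
    intervalIntegral.integral_hasDerivAt_right gauss_integrable.intervalIntegrable
      (hc.stronglyMeasurableAtFilter _ _) hc.continuousAt
  have h2 := ((h.const_sub (∫ u in Set.Ioi (0:ℝ), Real.exp (-u ^ 2 / 2))).const_mul
    ((Real.sqrt (2 * Real.pi))⁻¹))
  have : gaussQ = fun y => (Real.sqrt (2 * Real.pi))⁻¹ *
      ((∫ u in Set.Ioi (0:ℝ), Real.exp (-u ^ 2 / 2)) - ∫ u in (0:ℝ)..y, Real.exp (-u ^ 2 / 2)) :=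
    funext gaussQ_eq
  rw [this]
  refine h2.congr_deriv ?_
  ring

lemma gaussQ_antitone : Antitone gaussQ := by
  have hd : Differentiable ℝ gaussQ := fun x => (gaussQ_hasDerivAt x).differentiableAt
  apply antitone_of_deriv_nonpos hd
  intro x
  rw [(gaussQ_hasDerivAt x).deriv]
  have : 0 < Real.sqrt (2 * Real.pi) := Real.sqrt_pos.mpr (by positivity)
  simp only [neg_nonpos]; positivity

lemma gaussQ_convexOn : ConvexOn ℝ (Set.Ici 0) gaussQ := by
  have hd : Differentiable ℝ gaussQ := fun x => (gaussQ_hasDerivAt x).differentiableAt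
  apply MonotoneOn.convexOn_of_deriv (convex_Ici 0) hd.continuous.continuousOn
    hd.differentiableOn
  intro x hx y hy hxy
  rw [interior_Ici] at hx hy
  rw [(gaussQ_hasDerivAt x).deriv, (gaussQ_hasDerivAt y).deriv]
  have hs : 0 < Real.sqrt (2 * Real.pi) := Real.sqrt_pos.mpr (by positivity)
  have : Real.exp (-y ^ 2 / 2) ≤ Real.exp (-x ^ 2 / 2) := by
    apply Real.exp_le_exp.mpr
    nlinarith [(Set.mem_Ioi.mp hx).le, (Set.mem_Ioi.mp hy).le]
  nlinarith [Real.exp_pos (-x^2/2), inv_pos.mpr hs]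

theorem local_min_is_global
    (N : ℕ) (v : Fin N → ℂ) (s : Fin N → ℝ) (hs : ∀ b, s b = 1 ∨ s b = -1)
    (t : ℝ) (ht : 0 < t) (F : Set ℂ)
    (hF : F = {w : ℂ | ‖w‖ = 1 ∧ ∀ b : Fin N, s b * (w * v b).re ≥ 0})
    (P : ℂ → ℝ)
    (hP : ∀ w : ℂ, P w = (1 / (N : ℝ)) * ∑ b : Fin N, gaussQ (t * (s b * (w * v b).re)))
    (w₁ : ℂ) (hw₁ : w₁ ∈ F) (hglob : ∀ w ∈ F, P w₁ ≤ P w)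
    (w₂ : ℂ) (hw₂ : w₂ ∈ F) (hloc : IsLocalMinOn P F w₂) :
    P w₂ = P w₁ := by
  subst hF
  obtain ⟨habs₁, hsign₁⟩ := hw₁
  obtain ⟨habs₂, hsign₂⟩ := hw₂
  -- the path of normalized convex combinations
  set g : ℝ → ℂ := fun α => α • w₁ + (1 - α) • w₂ with hg
  set r : ℝ → ℝ := fun α => ‖g α‖ with hr
  set h : ℝ → ℂ := fun α => (r α)⁻¹ • g α with hh
  have hgc : Continuous g := by fun_prop
  have hg0 : g 0 = w₂ := by simp [hg]
  have hrc : Continuous r := continuous_norm.comp hgc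
  have hr0 : r 0 = 1 := by simp [hr, hg0, habs₂]
  set l : Filter ℝ := nhdsWithin 0 (Set.Ioi 0) with hl
  have hl0 : l ≤ nhds 0 := nhdsWithin_le_nhds
  have hαpos : ∀ᶠ α in l, 0 < α := self_mem_nhdsWithin
  have hα1 : ∀ᶠ α in l, α < 1 := hl0 (eventually_lt_nhds (by norm_num))
  have hrlim : Filter.Tendsto r l (nhds 1) := by
    have := hrc.continuousAt (x := (0:ℝ))
    rw [ContinuousAt, hr0] at this
    exact this.mono_left hl0
  have hrpos : ∀ᶠ α in l, 0 < r α := hrlim.eventually (eventually_gt_nhds (by norm_num))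
  -- norm of a convex combination is at most 1
  have hrle : ∀ α : ℝ, 0 ≤ α → α ≤ 1 → r α ≤ 1 := by
    intro α h0 h1
    calc r α = ‖α • w₁ + (1 - α) • w₂‖ := rfl
      _ ≤ ‖α • w₁‖ + ‖(1 - α) • w₂‖ := norm_add_le _ _
      _ = |α| * ‖w₁‖ + |1 - α| * ‖w₂‖ := by rw [norm_smul, norm_smul]; simp [Real.norm_eq_abs]
      _ = 1 := by
          rw [habs₁, habs₂,
            abs_of_nonneg h0, abs_of_nonneg (by linarith)]; ring
  -- real-part identity along the path
  have hre : ∀ (α : ℝ) (b : Fin N),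
      (g α * v b).re = α * (w₁ * v b).re + (1 - α) * (w₂ * v b).re := by
    intro α b
    simp [hg, add_mul, smul_mul_assoc, Complex.add_re, Complex.smul_re, Complex.mul_re]
    ring
  -- main inequality on F-membership and value of P along normalized path
  have key : ∀ α : ℝ, 0 < α → α < 1 → 0 < r α →
      (h α ∈ {w : ℂ | ‖w‖ = 1 ∧ ∀ b : Fin N, s b * (w * v b).re ≥ 0}) ∧
      P (h α) ≤ α * P w₁ + (1 - α) * P w₂ := by
    intro α h0 h1 hrα
    have hrle1 : r α ≤ 1 := hrle α h0.le h1.le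
    have hinv1 : (1:ℝ) ≤ (r α)⁻¹ := (one_le_inv₀ hrα).mpr hrle1
    have hhre : ∀ b : Fin N, (h α * v b).re = (r α)⁻¹ * (g α * v b).re := by
      intro b
      simp [hh, smul_mul_assoc, Complex.smul_re, Complex.mul_re]
      ring
    have habsh : ‖h α‖ = 1 := by
      show ‖(r α)⁻¹ • g α‖ = 1
      rw [norm_smul, Real.norm_of_nonneg (by positivity)]
      exact inv_mul_cancel₀ hrα.ne'
    have hsignh : ∀ b : Fin N, s b * (h α * v b).re ≥ 0 := by
      intro b
      rw [hhre b, hre α b]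
      have : s b * (α * (w₁ * v b).re + (1 - α) * (w₂ * v b).re)
          = α * (s b * (w₁ * v b).re) + (1 - α) * (s b * (w₂ * v b).re) := by ring
      have h₁ := hsign₁ b
      have h₂ := hsign₂ b
      have hz : 0 ≤ s b * (α * (w₁ * v b).re + (1 - α) * (w₂ * v b).re) := by
        rw [this]
        exact add_nonneg (mul_nonneg h0.le h₁) (mul_nonneg (by linarith) h₂)
      calc (0:ℝ) ≤ s b * (α * (w₁ * v b).re + (1 - α) * (w₂ * v b).re) := hz
        _ ≤ (r α)⁻¹ * (s b * (α * (w₁ * v b).re + (1 - α) * (w₂ * v b).re)) :=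
            le_mul_of_one_le_left hz hinv1
        _ = s b * ((r α)⁻¹ * (α * (w₁ * v b).re + (1 - α) * (w₂ * v b).re)) := by ring
    refine ⟨⟨habsh, hsignh⟩, ?_⟩
    -- termwise bound
    have hterm : ∀ b : Fin N,
        gaussQ (t * (s b * (h α * v b).re)) ≤
          α * gaussQ (t * (s b * (w₁ * v b).re)) +
          (1 - α) * gaussQ (t * (s b * (w₂ * v b).re)) := by
      intro b
      set x := t * (s b * (w₁ * v b).re) with hx
      set y := t * (s b * (w₂ * v b).re) with hy
      have hx0 : 0 ≤ x := mul_nonneg ht.le (hsign₁ b)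
      have hy0 : 0 ≤ y := mul_nonneg ht.le (hsign₂ b)
      have hz0 : 0 ≤ α * x + (1 - α) * y :=
        add_nonneg (mul_nonneg h0.le hx0) (mul_nonneg (by linarith) hy0)
      have harg : t * (s b * (h α * v b).re) = (r α)⁻¹ * (α * x + (1 - α) * y) := by
        rw [hhre b, hre α b, hx, hy]; ring
      have hge : α * x + (1 - α) * y ≤ t * (s b * (h α * v b).re) := by
        rw [harg]; exact le_mul_of_one_le_left hz0 hinv1
      calc gaussQ (t * (s b * (h α * v b).re)) ≤ gaussQ (α * x + (1 - α) * y) :=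
            gaussQ_antitone hge
        _ ≤ α * gaussQ x + (1 - α) * gaussQ y :=
            gaussQ_convexOn.2 hx0 hy0 h0.le (by linarith) (by ring)
    have hsum : ∑ b : Fin N, gaussQ (t * (s b * (h α * v b).re)) ≤
        ∑ b : Fin N, (α * gaussQ (t * (s b * (w₁ * v b).re)) +
          (1 - α) * gaussQ (t * (s b * (w₂ * v b).re))) :=
      Finset.sum_le_sum fun b _ => hterm b
    rw [hP (h α), hP w₁, hP w₂]
    rw [Finset.sum_add_distrib, ← Finset.mul_sum, ← Finset.mul_sum] at hsum
    have hN : (0:ℝ) ≤ 1 / (N:ℝ) := by positivity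
    nlinarith [mul_le_mul_of_nonneg_left hsum hN]
  -- h tends to w₂ within F
  have hhlim : Filter.Tendsto h l (nhds w₂) := by
    have hglim : Filter.Tendsto g l (nhds w₂) := by
      have := hgc.continuousAt (x := (0:ℝ))
      rw [ContinuousAt, hg0] at this
      exact this.mono_left hl0
    have hrinv : Filter.Tendsto (fun α => (r α)⁻¹) l (nhds 1) := by
      have := hrlim.inv₀ (by norm_num)
      simpa using this
    have h2 := hrinv.smul hglim
    simp only [one_smul] at h2
    exact h2
  have hmemF : ∀ᶠ α in l, h α ∈ {w : ℂ | ‖w‖ = 1 ∧ ∀ b : Fin N, s b * (w * v b).re ≥ 0} := by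
    filter_upwards [hαpos, hα1, hrpos] with α h0 h1 h2
    exact (key α h0 h1 h2).1
  have hhlimF : Filter.Tendsto h l
      (nhdsWithin w₂ {w : ℂ | ‖w‖ = 1 ∧ ∀ b : Fin N, s b * (w * v b).re ≥ 0}) := by
    rw [tendsto_nhdsWithin_iff]
    exact ⟨hhlim, hmemF⟩
  have hev : ∀ᶠ α in l, P w₂ ≤ P (h α) := hhlimF.eventually hloc
  have hfinal : ∀ᶠ α in l, P w₂ ≤ P w₁ := by
    filter_upwards [hαpos, hα1, hrpos, hev] with α h0 h1 h2 h3
    have := (key α h0 h1 h2).2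
    nlinarith
  obtain ⟨α, hα⟩ := hfinal.exists
  exact le_antisymm hα (hglob w₂ ⟨habs₂, hsign₂⟩)
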